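/- Let 𝐚⁰ ⊆ 𝐚¹ be knot sequences in an interval J ⊆ ℝ, and let θ⁰ = (θ⁰_a)_{a∈𝐚⁰, a<sup J} and θ¹ = (θ¹_a)_{a∈𝐚¹, a<sup J} be parameter sequences taking values in (0,1). For a ∈ 𝐚⁰ let a₊ denote its successor in 𝐚⁰, and set 𝐛⁰ := 𝐛(𝐚⁰,θ⁰) and 𝐛¹ := 𝐛(𝐚¹,θ¹). Assume that for every a ∈ 𝐚⁰ with a < sup J: b⁰_a ∈ 𝐚¹ whenever (a,a₊) contains a point of 𝐚¹, and b⁰_a ∈ 𝐛¹ whenever (a,a₊) contains no point of 𝐚¹. Then V(𝐚⁰,θ⁰) ⊆ V(𝐚¹,θ¹). -/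

import Mathlib

open MeasureTheory Set Filter

noncomputable section

namespace KnotWavelet

/-- The space `L²(J)` for `J ⊆ ℝ`. -/
abbrev L2S (J : Set ℝ) := Lp ℝ 2 (volume.restrict J)

/-- `f ∈ L²(J)` is supported (a.e.) in `I`. -/
def SuppIn (J : Set ℝ) (f : L2S J) (I : Set ℝ) : Prop :=
  ∀ᵐ x ∂(volume.restrict J), x ∉ I → f x = 0

/-- `G_I`, the members of `G` supported in `I`. -/
def suppSet (J : Set ℝ) (G : Set (L2S J)) (I : Set ℝ) : Set (L2S J) :=
  {g ∈ G | SuppIn J g I}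

/-- For a subspace `V`, the subspace of members supported in `I`. -/
def suppSub (J : Set ℝ) (V : Submodule ℝ (L2S J)) (I : Set ℝ) : Submodule ℝ (L2S J) where
  carrier := {f | f ∈ V ∧ SuppIn J f I}
  zero_mem' := ⟨V.zero_mem, by
    filter_upwards [Lp.coeFn_zero ℝ 2 (volume.restrict J)] with x hx _
    simpa using hx⟩
  add_mem' := by
    rintro f g ⟨hfV, hf⟩ ⟨hgV, hg⟩
    refine ⟨V.add_mem hfV hgV, ?_⟩
    filter_upwards [Lp.coeFn_add f g, hf, hg] with x hx h1 h2 hxI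
    rw [hx]
    simp [Pi.add_apply, h1 hxI, h2 hxI]
  smul_mem' := by
    rintro c f ⟨hfV, hf⟩
    refine ⟨V.smul_mem c hfV, ?_⟩
    filter_upwards [Lp.coeFn_smul c f, hf] with x hx h1 hxI
    rw [hx]
    simp [h1 hxI]

/-- The successor `a₊` of `a` in `ks`, as an extended real (`+∞` if there is none). -/
def succE (ks : Set ℝ) (a : ℝ) : EReal := sInf ((fun x : ℝ => (x : EReal)) '' {b ∈ ks | a < b})

/-- The predecessor `a₋` of `a` in `ks`, as an extended real (`−∞` if there is none). -/
def predE (ks : Set ℝ) (a : ℝ) : EReal := sSup ((fun x : ℝ => (x : EReal)) '' {b ∈ ks | b < a})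

/-- The successor `a₊` of `a` in `ks` as a real number (junk value if there is none). -/
def succR (ks : Set ℝ) (a : ℝ) : ℝ := sInf {b ∈ ks | a < b}

/-- The interval `[a, a₊]`. -/
def IccS (ks : Set ℝ) (a : ℝ) : Set ℝ := {x | a ≤ x ∧ (x : EReal) ≤ succE ks a}

/-- The interval `[a₋, a₊]`. -/
def IccPS (ks : Set ℝ) (a : ℝ) : Set ℝ :=
  {x | predE ks a ≤ (x : EReal) ∧ (x : EReal) ≤ succE ks a}

/-- The interval `[a₋, a]`. -/
def IccP (ks : Set ℝ) (a : ℝ) : Set ℝ := {x | predE ks a ≤ (x : EReal) ∧ x ≤ a}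

/-- The interval `(a, a₊)`. -/
def IooS (ks : Set ℝ) (a : ℝ) : Set ℝ := {x | a < x ∧ (x : EReal) < succE ks a}

/-- The interval `[a₊, ∞)` (empty if `a₊ = +∞`). -/
def IciS (ks : Set ℝ) (a : ℝ) : Set ℝ := {x | succE ks a ≤ (x : EReal)}

/-- `ks` is a knot sequence in the interval `J`: it is a subset of `J` with at least three
elements, has no cluster (accumulation) point in `J`, and `inf ks = inf J`, `sup ks = sup J`
(as extended reals). -/
structure IsKnotSeq (J ks : Set ℝ) : Prop where
  subset : ks ⊆ J
  nontrivial : ∃ x y z : ℝ, x ∈ ks ∧ y ∈ ks ∧ z ∈ ks ∧ x ≠ y ∧ x ≠ z ∧ y ≠ z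
  noCluster : ∀ x ∈ J, ¬ AccPt x (Filter.principal ks)
  inf_eq : sInf ((fun x : ℝ => (x : EReal)) '' ks) = sInf ((fun x : ℝ => (x : EReal)) '' J)
  sup_eq : sSup ((fun x : ℝ => (x : EReal)) '' ks) = sSup ((fun x : ℝ => (x : EReal)) '' J)

/-- `a'` is the successor of `a` in `ks`. -/
def IsSucc (ks : Set ℝ) (a a' : ℝ) : Prop :=
  a ∈ ks ∧ a' ∈ ks ∧ a < a' ∧ ∀ b ∈ ks, b ≤ a ∨ a' ≤ b

/-- A collection `Φ ⊆ L²(J)` is locally finite: on each compact interval `K ⊆ J` all but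
finitely many members of `Φ` vanish (a.e.) on `K`. -/
def LocFin (J : Set ℝ) (Φ : Set (L2S J)) : Prop :=
  ∀ K : Set ℝ, IsCompact K → K ⊆ J →
    {φ ∈ Φ | ¬ ∀ᵐ x ∂(volume.restrict J), x ∈ K → φ x = 0}.Finite

/-- `Φ̆_a := Φ_{[a,a₊]}`. -/
def breveAt (J : Set ℝ) (ks : Set ℝ) (Φ : Set (L2S J)) (a : ℝ) : Set (L2S J) :=
  suppSet J Φ (IccS ks a)

open Classical in
/-- `Φ̆_{a₋}` (the empty set if `a` has no predecessor). -/
def brevePred (J : Set ℝ) (ks : Set ℝ) (Φ : Set (L2S J)) (a : ℝ) : Set (L2S J) :=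
  if {b ∈ ks | b < a}.Nonempty then suppSet J Φ (IccP ks a) else ∅

/-- `Φ_a := Φ_{[a₋,a₊]} \ Φ̆_{a₋}`. -/
def midAt (J : Set ℝ) (ks : Set ℝ) (Φ : Set (L2S J)) (a : ℝ) : Set (L2S J) :=
  suppSet J Φ (IccPS ks a) \ brevePred J ks Φ a

/-- `Φ̄_a := Φ_a \ Φ̆_a`. -/
def barAt (J : Set ℝ) (ks : Set ℝ) (Φ : Set (L2S J)) (a : ℝ) : Set (L2S J) :=
  midAt J ks Φ a \ breveAt J ks Φ a

open Classical in
/-- `Φ̄_{a₊}` (the empty set if `a` has no successor). -/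
def barSucc (J : Set ℝ) (ks : Set ℝ) (Φ : Set (L2S J)) (a : ℝ) : Set (L2S J) :=
  if {b ∈ ks | a < b}.Nonempty then barAt J ks Φ (succR ks a) else ∅

open Classical in
/-- Multiplication by the characteristic function of `I` (restriction to `I`). -/
def indL2 (J : Set ℝ) (I : Set ℝ) (f : L2S J) : L2S J :=
  if h : MeasurableSet I then ((Lp.memLp f).indicator h).toLp (I.indicator f) else 0

/-- `Φ` is a basis centered on the knot sequence `ks`. -/
def CenteredBasis (J ks : Set ℝ) (Φ : Set (L2S J)) : Prop :=
  LocFin J Φ ∧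
  Φ = ⋃ a ∈ ks, midAt J ks Φ a ∧
  ∀ a ∈ ks, LinearIndependent ℝ
    (fun φ : ↥(midAt J ks Φ a ∪ barSucc J ks Φ a) => indL2 J (IccS ks a) (φ : L2S J))

/-- `S(Φ)`: the `L²`-closure of the span of `Φ`. -/
def SClos (J : Set ℝ) (Φ : Set (L2S J)) : Submodule ℝ (L2S J) :=
  (Submodule.span ℝ Φ).topologicalClosure

/-- An orthogonal basis centered on `ks`. -/
def OrthoCenteredBasis (J ks : Set ℝ) (Φ : Set (L2S J)) : Prop :=
  CenteredBasis J ks Φ ∧ Φ.Pairwise fun f g => (inner ℝ f g : ℝ) = 0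

/-- The orthogonal projection onto the closure of a subspace, as a linear map. -/
def projL {H : Type*} [NormedAddCommGroup H] [InnerProductSpace ℝ H] [CompleteSpace H]
    (K : Submodule ℝ H) : H →ₗ[ℝ] H :=
  K.topologicalClosure.subtype ∘ₗ
    (K.topologicalClosure.orthogonalProjectionOnto : H →L[ℝ] K.topologicalClosure).toLinearMap

/-- The image `P_K U` of a subspace `U` under the orthogonal projection onto (the closure of)
`K`. -/
def projSub {H : Type*} [NormedAddCommGroup H] [InnerProductSpace ℝ H] [CompleteSpace H]
    (K U : Submodule ℝ H) : Submodule ℝ H :=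
  U.map (projL K)

/-- The image `(I − P_K) U`. -/
def oneSubProjSub {H : Type*} [NormedAddCommGroup H] [InnerProductSpace ℝ H] [CompleteSpace H]
    (K U : Submodule ℝ H) : Submodule ℝ H :=
  U.map (LinearMap.id - projL K)

/-- Two subspaces are orthogonal. -/
def PerpSub {H : Type*} [NormedAddCommGroup H] [InnerProductSpace ℝ H]
    (U V : Submodule ℝ H) : Prop :=
  ∀ f ∈ U, ∀ g ∈ V, (inner ℝ f g : ℝ) = 0

end KnotWavelet

namespace QuadWavelet

/-- The space `L²(ℝ)`. -/
abbrev L2R := Lp ℝ 2 (volume : Measure ℝ)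

open Classical in
/-- Interpret a plain function as an element of `L²(ℝ)`. -/
def toL2R (f : ℝ → ℝ) : L2R :=
  if h : MemLp f 2 (volume : Measure ℝ) then h.toLp f else 0

/-- Orthogonal projection onto (the closure of) a subspace. -/
def projC (K : Submodule ℝ L2R) (f : L2R) : L2R :=
  (K.topologicalClosure.orthogonalProjectionOnto f : L2R)

/-- `r(x) = x·χ_{[0,1)}(x)`. -/
def rf : ℝ → ℝ := fun x => Set.indicator (Set.Ico (0 : ℝ) 1) (fun y => y) x

/-- `l(x) = (1−x)·χ_{[0,1)}(x)`. -/
def lf : ℝ → ℝ := fun x => Set.indicator (Set.Ico (0 : ℝ) 1) (fun y => 1 - y) x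

/-- `q(x) = 4x(1−x)·χ_{[0,1)}(x)`. -/
def qf : ℝ → ℝ := fun x => Set.indicator (Set.Ico (0 : ℝ) 1) (fun y => 4 * y * (1 - y)) x

/-- `q₀^θ(x) = q(x/θ)`. -/
def q0f (θ : ℝ) : ℝ → ℝ := fun x => qf (x / θ)

/-- `q₁^θ(x) = q((x−θ)/(1−θ))`. -/
def q1f (θ : ℝ) : ℝ → ℝ := fun x => qf ((x - θ) / (1 - θ))

/-- `h^θ(x) = r(x/θ) + l((x−θ)/(1−θ))`. -/
def hF (θ : ℝ) : ℝ → ℝ := fun x => rf (x / θ) + lf ((x - θ) / (1 - θ))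

/-- `u₀ = (1−θ)²(2+3θ)q₀^θ + θ²(3θ−5)q₁^θ`. -/
def u0f (θ : ℝ) : ℝ → ℝ := fun x =>
  (1 - θ) ^ 2 * (2 + 3 * θ) * q0f θ x + θ ^ 2 * (3 * θ - 5) * q1f θ x

/-- `u₁ = (−2+3(θ−1)θ³)q₀^θ + (−2+3(θ−1)³θ)q₁^θ + (16/5 − 12(θ−1)²θ²)h^θ`. -/
def u1f (θ : ℝ) : ℝ → ℝ := fun x =>
  (-2 + 3 * (θ - 1) * θ ^ 3) * q0f θ x + (-2 + 3 * (θ - 1) ^ 3 * θ) * q1f θ x +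
    (16 / 5 - 12 * (θ - 1) ^ 2 * θ ^ 2) * hF θ x

/-- `c^θ`. -/
def cTheta (θ : ℝ) : ℝ :=
  (20 * (2 + θ * (9 + 13 * θ * (2 * θ - 3))) +
      4 * Real.sqrt 5 * (4 - 15 * (1 - θ) ^ 2 * θ ^ 2)) /
    (8 * (1 + 45 * (1 - θ) * θ))

/-- `z^θ := c^θ·u₀ + u₁`. -/
def zTf (θ : ℝ) : ℝ → ℝ := fun x => cTheta θ * u0f θ x + u1f θ x

end QuadWavelet

namespace KnotWavelet

open QuadWavelet

open Classical in
/-- Interpret a plain function as an element of `L²(J)`. -/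
def toL2 (J : Set ℝ) (f : ℝ → ℝ) : L2S J :=
  if h : MemLp f 2 (volume.restrict J) then h.toLp f else 0

/-- The spline space `S₂⁰(ks)`: continuous functions in `L²(J)` supported in `J` that are
polynomials of degree at most `2` on each interval `(a, a₊)`, `a ∈ ks`. -/
def S20 (J ks : Set ℝ) : Set (L2S J) :=
  {f | ∃ g : ℝ → ℝ, ContinuousOn g J ∧ (∀ x ∉ J, g x = 0) ∧
    (∀ a ∈ ks, ∃ q : Polynomial ℝ, q.degree ≤ (2 : WithBot ℕ) ∧
      ∀ x ∈ IooS ks a, g x = q.eval x) ∧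
    (⇑f : ℝ → ℝ) =ᵐ[volume.restrict J] g}

/-- `z_a := z^{θ_a} ∘ σ_a`, where `σ_a` is the affine map sending `a ↦ 0` and `a₊ ↦ 1`. -/
def zKnot (J ks : Set ℝ) (θ : ℝ → ℝ) (a : ℝ) : L2S J :=
  toL2 J fun x => zTf (θ a) ((x - a) / (succR ks a - a))

/-- `b_a := (1−θ_a)a + θ_a·a₊`. -/
def bpt (ks : Set ℝ) (θ : ℝ → ℝ) (a : ℝ) : ℝ := (1 - θ a) * a + θ a * succR ks a

/-- `𝐛(ks, θ) := {b_a : a ∈ ks, a < sup J}`. -/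
def bSet (J ks : Set ℝ) (θ : ℝ → ℝ) : Set ℝ :=
  {x | ∃ a ∈ ks, (∃ y ∈ J, a < y) ∧ x = bpt ks θ a}

/-- `V(ks, θ)`: the `L²(J)`-closure of `S₂⁰(ks) + span {z_a : a ∈ ks, a < sup J}`. -/
def Vq (J ks : Set ℝ) (θ : ℝ → ℝ) : Submodule ℝ (L2S J) :=
  (Submodule.span ℝ
    (S20 J ks ∪ {f | ∃ a ∈ ks, (∃ y ∈ J, a < y) ∧ f = zKnot J ks θ a})).topologicalClosure

end KnotWavelet

namespace VqHelpers
open QuadWavelet Set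

lemma qf_eq : qf = fun x => 4 * (min 1 (max 0 x)) * (1 - min 1 (max 0 x)) := by
  funext x
  simp only [qf, Set.indicator_apply, Set.mem_Ico]
  rcases lt_or_ge x 0 with h | h
  · rw [if_neg (by simp [h.not_ge]), max_eq_left h.le, min_eq_right zero_le_one]
    ring
  · rw [max_eq_right h]
    rcases lt_or_ge x 1 with h1 | h1
    · rw [if_pos ⟨h, h1⟩, min_eq_right h1.le]
    · rw [if_neg (by simp [h1.not_gt]), min_eq_left h1]
      ring

lemma qf_cont : Continuous qf := by
  rw [qf_eq]; fun_prop

lemma hF_eq {θ : ℝ} (hθ : θ ∈ Set.Ioo (0:ℝ) 1) :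
    hF θ = fun x => max 0 (min (x / θ) ((1 - x) / (1 - θ))) := by
  obtain ⟨h0, h1⟩ := hθ
  have h1' : (0:ℝ) < 1 - θ := by linarith
  funext x
  simp only [hF, rf, lf, Set.indicator_apply, Set.mem_Ico]
  rcases lt_or_ge x 0 with hx | hx
  · have d1 : x / θ < 0 := div_neg_of_neg_of_pos hx h0
    have d2 : (x - θ) / (1 - θ) < 0 := div_neg_of_neg_of_pos (by linarith) h1'
    rw [if_neg (by intro h; exact absurd h.1 d1.not_ge),
      if_neg (by intro h; exact absurd h.1 d2.not_ge),
      max_eq_left (le_of_lt (lt_of_le_of_lt (min_le_left _ _) d1))]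
    norm_num
  · rcases lt_or_ge x θ with hxθ | hxθ
    · have d2 : (x - θ) / (1 - θ) < 0 := div_neg_of_neg_of_pos (by linarith) h1'
      rw [if_pos ⟨div_nonneg hx h0.le, (div_lt_one h0).mpr hxθ⟩,
        if_neg (by intro h; exact absurd h.1 d2.not_ge),
        min_eq_left (by rw [div_le_div_iff₀ h0 h1']; nlinarith),
        max_eq_right (div_nonneg hx h0.le)]
      ring
    · rcases lt_or_ge x 1 with hx1 | hx1
      · rw [if_neg (by intro h; exact absurd h.2 (not_lt.mpr ((one_le_div h0).mpr hxθ))),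
          if_pos ⟨div_nonneg (by linarith) h1'.le, (div_lt_one h1').mpr (by linarith)⟩,
          min_eq_right (by rw [div_le_div_iff₀ h1' h0]; nlinarith),
          max_eq_right (div_nonneg (by linarith) h1'.le)]
        field_simp
        ring
      · have d2 : (1:ℝ) ≤ (x - θ) / (1 - θ) := (one_le_div h1').mpr (by linarith)
        rw [if_neg (by intro h; exact absurd h.2 (not_lt.mpr ((one_le_div h0).mpr (by linarith)))),
          if_neg (by intro h; exact absurd h.2 (not_lt.mpr d2)),
          max_eq_left (le_trans (min_le_right _ _) (div_nonpos_of_nonpos_of_nonneg (by linarith) h1'.le))]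
        norm_num

lemma hF_cont {θ : ℝ} (hθ : θ ∈ Set.Ioo (0:ℝ) 1) : Continuous (hF θ) := by
  rw [hF_eq hθ]; fun_prop

lemma zTf_cont {θ : ℝ} (hθ : θ ∈ Set.Ioo (0:ℝ) 1) : Continuous (zTf θ) := by
  have hq0 : Continuous (q0f θ) := qf_cont.comp (by fun_prop)
  have hq1 : Continuous (q1f θ) := qf_cont.comp (by fun_prop)
  have hh := hF_cont hθ
  unfold zTf u0f u1f
  fun_prop

lemma qf_of_mem {x : ℝ} (h : x ∈ Set.Ico (0:ℝ) 1) : qf x = 4 * x * (1 - x) :=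
  Set.indicator_of_mem h _

lemma qf_of_not_mem {x : ℝ} (h : x ∉ Set.Ico (0:ℝ) 1) : qf x = 0 :=
  Set.indicator_of_notMem h _

lemma rf_of_mem {x : ℝ} (h : x ∈ Set.Ico (0:ℝ) 1) : rf x = x := Set.indicator_of_mem h _

lemma rf_of_not_mem {x : ℝ} (h : x ∉ Set.Ico (0:ℝ) 1) : rf x = 0 :=
  Set.indicator_of_notMem h _

lemma lf_of_mem {x : ℝ} (h : x ∈ Set.Ico (0:ℝ) 1) : lf x = 1 - x := Set.indicator_of_mem h _

lemma lf_of_not_mem {x : ℝ} (h : x ∉ Set.Ico (0:ℝ) 1) : lf x = 0 :=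
  Set.indicator_of_notMem h _

lemma zTf_zero {θ t : ℝ} (hθ : θ ∈ Set.Ioo (0:ℝ) 1) (ht : t < 0 ∨ 1 ≤ t) : zTf θ t = 0 := by
  obtain ⟨h0, h1⟩ := hθ
  have h1' : (0:ℝ) < 1 - θ := by linarith
  have n1 : t / θ ∉ Set.Ico (0:ℝ) 1 := by
    rcases ht with ht | ht
    · exact fun h => (div_neg_of_neg_of_pos ht h0).not_ge h.1
    · exact fun h => h.2.not_ge ((one_le_div h0).mpr (by linarith))
  have n2 : (t - θ) / (1 - θ) ∉ Set.Ico (0:ℝ) 1 := by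
    rcases ht with ht | ht
    · exact fun h => (div_neg_of_neg_of_pos (by linarith) h1').not_ge h.1
    · exact fun h => h.2.not_ge ((one_le_div h1').mpr (by linarith))
  simp [zTf, u0f, u1f, q0f, q1f, hF, qf_of_not_mem, rf_of_not_mem, lf_of_not_mem, n1, n2]

lemma zpoly_left {θ : ℝ} (hθ : θ ∈ Set.Ioo (0:ℝ) 1) :
    ∃ p : Polynomial ℝ, p.natDegree ≤ 2 ∧ ∀ t ∈ Set.Ioo (0:ℝ) θ, zTf θ t = p.eval t := by
  obtain ⟨h0, h1⟩ := hθ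
  have h1' : (0:ℝ) < 1 - θ := by linarith
  set A := cTheta θ * ((1 - θ)^2 * (2 + 3*θ)) + (-2 + 3*(θ-1)*θ^3) with hA
  set B := (16/5 - 12*(θ-1)^2*θ^2 : ℝ) with hB
  refine ⟨Polynomial.C (-(4*A)/θ^2) * Polynomial.X^2 +
    Polynomial.C ((4*A)/θ + B/θ) * Polynomial.X, ?_, ?_⟩
  · compute_degree
  · rintro t ⟨ht0, htθ⟩
    have hmem : t / θ ∈ Set.Ico (0:ℝ) 1 := ⟨div_nonneg ht0.le h0.le, (div_lt_one h0).mpr htθ⟩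
    have hnot : (t - θ) / (1 - θ) ∉ Set.Ico (0:ℝ) 1 :=
      fun h => (div_neg_of_neg_of_pos (by linarith) h1').not_ge h.1
    have key : zTf θ t = A * (4 * (t/θ) * (1 - t/θ)) + B * (t/θ) := by
      simp only [zTf, u0f, u1f, q0f, q1f, hF, qf_of_mem hmem, qf_of_not_mem hnot,
        rf_of_mem hmem, lf_of_not_mem hnot, ← hA, ← hB]
      ring
    rw [key]
    simp only [Polynomial.eval_add, Polynomial.eval_mul, Polynomial.eval_C, Polynomial.eval_X,
      Polynomial.eval_pow]
    field_simp
    ring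

set_option maxHeartbeats 1000000 in
lemma zpoly_right {θ : ℝ} (hθ : θ ∈ Set.Ioo (0:ℝ) 1) :
    ∃ p : Polynomial ℝ, p.natDegree ≤ 2 ∧ ∀ t ∈ Set.Ioo θ 1, zTf θ t = p.eval t := by
  obtain ⟨h0, h1⟩ := hθ
  have h1' : (0:ℝ) < 1 - θ := by linarith
  set A := cTheta θ * (θ^2 * (3*θ - 5)) + (-2 + 3*(θ-1)^3*θ) with hA
  set B := (16/5 - 12*(θ-1)^2*θ^2 : ℝ) with hB
  refine ⟨Polynomial.C (-(4*A)/(1-θ)^2) * Polynomial.X^2 +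
    Polynomial.C ((4*A)/(1-θ) + 8*A*θ/(1-θ)^2 - B/(1-θ)) * Polynomial.X +
    Polynomial.C (-(4*A*θ)/(1-θ) - 4*A*θ^2/(1-θ)^2 + B + B*θ/(1-θ)), ?_, ?_⟩
  · compute_degree
  · rintro t ⟨htθ, ht1⟩
    have hmem : (t - θ) / (1 - θ) ∈ Set.Ico (0:ℝ) 1 :=
      ⟨div_nonneg (by linarith) h1'.le, (div_lt_one h1').mpr (by linarith)⟩
    have hnot : t / θ ∉ Set.Ico (0:ℝ) 1 :=
      fun h => h.2.not_ge ((one_le_div h0).mpr (by linarith))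
    have key : zTf θ t = A * (4 * ((t-θ)/(1-θ)) * (1 - (t-θ)/(1-θ))) +
        B * (1 - (t-θ)/(1-θ)) := by
      simp only [zTf, u0f, u1f, q0f, q1f, hF, qf_of_mem hmem, qf_of_not_mem hnot,
        rf_of_not_mem hnot, lf_of_mem hmem, ← hA, ← hB]
      ring
    rw [key]
    simp only [Polynomial.eval_add, Polynomial.eval_mul, Polynomial.eval_C, Polynomial.eval_X,
      Polynomial.eval_pow]
    field_simp
    ring

lemma poly_comp_affine {p : Polynomial ℝ} (hp : p.natDegree ≤ 2) (c d : ℝ) :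
    ∃ q : Polynomial ℝ, q.degree ≤ (2 : WithBot ℕ) ∧
      ∀ x : ℝ, q.eval x = p.eval ((x - c) / d) := by
  refine ⟨p.comp (Polynomial.C (1/d) * (Polynomial.X - Polynomial.C c)), ?_, ?_⟩
  · have h1 : (Polynomial.C (1/d) * (Polynomial.X - Polynomial.C c)).natDegree ≤ 1 := by
      compute_degree
    have := Polynomial.natDegree_comp_le
      (p := p) (q := Polynomial.C (1/d) * (Polynomial.X - Polynomial.C c))
    have h2 : (p.comp (Polynomial.C (1/d) * (Polynomial.X - Polynomial.C c))).natDegree ≤ 2 :=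
      le_trans this (by nlinarith [Nat.mul_le_mul hp h1])
    exact_mod_cast Polynomial.natDegree_le_iff_degree_le.mp h2
  · intro x
    rw [Polynomial.eval_comp]
    congr 1
    simp only [Polynomial.eval_mul, Polynomial.eval_C, Polynomial.eval_sub, Polynomial.eval_X]
    ring

section Knot

open KnotWavelet

variable {J ks : Set ℝ}

lemma accPt_of_sInf {S : Set ℝ} (hne : S.Nonempty) (hbd : BddBelow S) (h : sInf S ∉ S) :
    AccPt (sInf S) (Filter.principal S) := by
  rw [accPt_iff_nhds]
  intro U hU
  obtain ⟨ε, hε, hball⟩ := Metric.mem_nhds_iff.mp hU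
  obtain ⟨b, hbS, hb⟩ := (csInf_lt_iff hbd hne).mp (by linarith : sInf S < sInf S + ε)
  have hb' : sInf S ≤ b := csInf_le hbd hbS
  refine ⟨b, ⟨hball ?_, hbS⟩, fun hb'' => h (hb'' ▸ hbS)⟩
  rw [Metric.mem_ball, Real.dist_eq, abs_lt]
  constructor <;> linarith

lemma accPt_of_sSup {S : Set ℝ} (hne : S.Nonempty) (hbd : BddAbove S) (h : sSup S ∉ S) :
    AccPt (sSup S) (Filter.principal S) := by
  rw [accPt_iff_nhds]
  intro U hU
  obtain ⟨ε, hε, hball⟩ := Metric.mem_nhds_iff.mp hU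
  obtain ⟨b, hbS, hb⟩ := (lt_csSup_iff hbd hne).mp (by linarith : sSup S - ε < sSup S)
  have hb' : b ≤ sSup S := le_csSup hbd hbS
  refine ⟨b, ⟨hball ?_, hbS⟩, fun hb'' => h (hb'' ▸ hbS)⟩
  rw [Metric.mem_ball, Real.dist_eq, abs_lt]
  constructor <;> linarith

lemma exists_gt_knot (h : IsKnotSeq J ks) {a y : ℝ} (hy : y ∈ J) (hay : a < y) :
    ∃ b ∈ ks, a < b := by
  have hlt : (a : EReal) < sSup ((fun x : ℝ => (x : EReal)) '' ks) := by
    rw [h.sup_eq]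
    exact lt_of_lt_of_le (EReal.coe_lt_coe_iff.mpr hay) (le_sSup ⟨y, hy, rfl⟩)
  obtain ⟨z, hz, haz⟩ := lt_sSup_iff.mp hlt
  obtain ⟨b, hb, rfl⟩ := hz
  exact ⟨b, hb, EReal.coe_lt_coe_iff.mp haz⟩

lemma isLeast_succ (hJ : J.OrdConnected) (h : IsKnotSeq J ks) {a : ℝ} (ha : a ∈ J)
    (hb : ∃ b ∈ ks, a < b) : IsLeast {b ∈ ks | a < b} (succR ks a) := by
  obtain ⟨b₀, hb₀, hab₀⟩ := hb
  have hne : {b ∈ ks | a < b}.Nonempty := ⟨b₀, hb₀, hab₀⟩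
  have hbd : BddBelow {b ∈ ks | a < b} := ⟨a, fun b hb => hb.2.le⟩
  have hmem : sInf {b ∈ ks | a < b} ∈ {b ∈ ks | a < b} := by
    by_contra hc
    have hacc : AccPt (sInf {b ∈ ks | a < b}) (Filter.principal ks) :=
      (accPt_of_sInf hne hbd hc).mono (Filter.principal_mono.mpr (fun b hb => hb.1))
    refine h.noCluster _ ?_ hacc
    exact hJ.out ha (h.subset hb₀)
      ⟨le_csInf hne (fun b hb => hb.2.le), csInf_le hbd ⟨hb₀, hab₀⟩⟩
  exact ⟨hmem, fun b hb => csInf_le hbd hb⟩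

lemma isGreatest_pred (hJ : J.OrdConnected) (h : IsKnotSeq J ks) {a : ℝ} (ha : a ∈ J) :
    IsGreatest {b ∈ ks | b ≤ a} (sSup {b ∈ ks | b ≤ a}) := by
  have hne : {b ∈ ks | b ≤ a}.Nonempty := by
    by_contra hc
    rw [Set.not_nonempty_iff_eq_empty] at hc
    have hgt : ∀ b ∈ ks, a < b := by
      intro b hb
      by_contra hb'
      exact Set.eq_empty_iff_forall_notMem.mp hc b ⟨hb, not_lt.mp hb'⟩
    have hinf : sInf ((fun x : ℝ => (x : EReal)) '' ks) = (a : EReal) := by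
      refine le_antisymm ?_ ?_
      · rw [h.inf_eq]; exact sInf_le ⟨a, ha, rfl⟩
      · exact le_sInf (by rintro z ⟨b, hb, rfl⟩; exact (EReal.coe_le_coe_iff.mpr (hgt b hb).le))
    refine h.noCluster a ha ?_
    rw [accPt_iff_nhds]
    intro U hU
    obtain ⟨ε, hε, hball⟩ := Metric.mem_nhds_iff.mp hU
    have : sInf ((fun x : ℝ => (x : EReal)) '' ks) < ((a + ε : ℝ) : EReal) := by
      rw [hinf]; exact EReal.coe_lt_coe_iff.mpr (by linarith)
    obtain ⟨z, hz, hzlt⟩ := sInf_lt_iff.mp this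
    obtain ⟨b, hb, rfl⟩ := hz
    have h1 : b < a + ε := EReal.coe_lt_coe_iff.mp hzlt
    have h2 : a < b := hgt b hb
    refine ⟨b, ⟨hball ?_, hb⟩, h2.ne'⟩
    rw [Metric.mem_ball, Real.dist_eq, abs_lt]
    constructor <;> linarith
  have hbd : BddAbove {b ∈ ks | b ≤ a} := ⟨a, fun b hb => hb.2⟩
  have hmem : sSup {b ∈ ks | b ≤ a} ∈ {b ∈ ks | b ≤ a} := by
    by_contra hc
    have hacc : AccPt (sSup {b ∈ ks | b ≤ a}) (Filter.principal ks) :=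
      (accPt_of_sSup hne hbd hc).mono (Filter.principal_mono.mpr (fun b hb => hb.1))
    obtain ⟨b₀, hb₀⟩ := id hne
    refine h.noCluster _ ?_ hacc
    exact hJ.out (h.subset hb₀.1) ha ⟨le_csSup hbd hb₀, csSup_le hne (fun b hb => hb.2)⟩
  exact ⟨hmem, fun b hb => le_csSup hbd hb⟩

lemma S20_mono (hJ : J.OrdConnected) {ks₀ ks₁ : Set ℝ} (h₀ : IsKnotSeq J ks₀)
    (h₁ : IsKnotSeq J ks₁) (hsub : ks₀ ⊆ ks₁) : S20 J ks₀ ⊆ S20 J ks₁ := by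
  rintro f ⟨g, hg1, hg2, hg3, hg4⟩
  refine ⟨g, hg1, hg2, ?_, hg4⟩
  intro a ha
  have haJ : a ∈ J := h₁.subset ha
  obtain ⟨⟨hcks, hca⟩, hmax⟩ := isGreatest_pred hJ h₀ haJ
  obtain ⟨q, hq, heq⟩ := hg3 _ hcks
  refine ⟨q, hq, fun x hx => heq x ?_⟩
  obtain ⟨hx1, hx2⟩ := hx
  refine ⟨lt_of_le_of_lt hca hx1, lt_of_lt_of_le hx2 ?_⟩
  apply le_sInf
  rintro z ⟨b, ⟨hb, hcb⟩, rfl⟩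
  have hab : a < b := lt_of_not_ge fun h' => (hmax ⟨hb, h'⟩).not_gt hcb
  exact sInf_le ⟨b, ⟨hsub hb, hab⟩, rfl⟩

end Knot

section Main

open KnotWavelet

lemma zKnot_mem_S20 {J : Set ℝ} (hJ : J.OrdConnected) {ks : Set ℝ} (h₁ : IsKnotSeq J ks)
    {a s θv : ℝ} (hθ : θv ∈ Set.Ioo (0:ℝ) 1) (haks : a ∈ ks) (hsks : s ∈ ks) (has : a < s)
    (hbks : (1 - θv) * a + θv * s ∈ ks) :
    (toL2 J fun x => zTf θv ((x - a) / (s - a))) ∈ S20 J ks := by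
  set b := (1 - θv) * a + θv * s with hbdef
  set g : ℝ → ℝ := fun x => zTf θv ((x - a) / (s - a)) with hgdef
  have hsa : (0:ℝ) < s - a := by linarith
  have hab : a < b := by nlinarith [hθ.1, hθ.2]
  have hbs : b < s := by nlinarith [hθ.1, hθ.2]
  have hgcont : Continuous g := (zTf_cont hθ).comp (by fun_prop)
  have hzero : ∀ x : ℝ, x < a ∨ s ≤ x → g x = 0 := by
    intro x hx
    apply zTf_zero hθ
    rcases hx with hx | hx
    · exact Or.inl (div_neg_of_neg_of_pos (by linarith) hsa)
    · exact Or.inr ((one_le_div hsa).mpr (by linarith))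
  have hout : ∀ x ∉ J, g x = 0 := by
    intro x hx
    apply hzero
    by_contra hc
    push_neg at hc
    exact hx (hJ.out (h₁.subset haks) (h₁.subset hsks) ⟨hc.1, hc.2.le⟩)
  have hcs : HasCompactSupport g := by
    apply HasCompactSupport.intro (isCompact_Icc (a := a) (b := s))
    intro x hx
    simp only [Set.mem_Icc, not_and_or, not_le] at hx
    exact hzero x (hx.imp id le_of_lt)
  have hmem : MemLp g 2 (volume.restrict J) :=
    (hgcont.memLp_of_hasCompactSupport (μ := volume) hcs).restrict J
  obtain ⟨p1, hp1d, hp1⟩ := zpoly_left hθ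
  obtain ⟨p2, hp2d, hp2⟩ := zpoly_right hθ
  obtain ⟨q1, hq1d, hq1⟩ := poly_comp_affine hp1d a (s - a)
  obtain ⟨q2, hq2d, hq2⟩ := poly_comp_affine hp2d a (s - a)
  refine ⟨g, hgcont.continuousOn, hout, ?_, ?_⟩
  · intro c hc
    rcases lt_or_ge c a with hca | hca
    · refine ⟨0, by simp, fun x hx => ?_⟩
      have hxa : x < a := EReal.coe_lt_coe_iff.mp
        (lt_of_lt_of_le hx.2 (sInf_le ⟨a, ⟨haks, hca⟩, rfl⟩))
      rw [hzero x (Or.inl hxa)]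
      simp
    · rcases lt_or_ge c b with hcb | hcb
      · refine ⟨q1, hq1d, fun x hx => ?_⟩
        have hx1 : a < x := lt_of_le_of_lt hca hx.1
        have hx2 : x < b := EReal.coe_lt_coe_iff.mp
          (lt_of_lt_of_le hx.2 (sInf_le ⟨b, ⟨hbks, hcb⟩, rfl⟩))
        rw [hq1 x]
        exact hp1 _ ⟨div_pos (by linarith) hsa,
          (div_lt_iff₀ hsa).mpr (by nlinarith [hx2])⟩
      · rcases lt_or_ge c s with hcs' | hcs'
        · refine ⟨q2, hq2d, fun x hx => ?_⟩
          have hx1 : b < x := lt_of_le_of_lt hcb hx.1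
          have hx2 : x < s := EReal.coe_lt_coe_iff.mp
            (lt_of_lt_of_le hx.2 (sInf_le ⟨s, ⟨hsks, hcs'⟩, rfl⟩))
          rw [hq2 x]
          exact hp2 _ ⟨(lt_div_iff₀ hsa).mpr (by nlinarith [hx1]),
            (div_lt_one hsa).mpr (by linarith)⟩
        · refine ⟨0, by simp, fun x hx => ?_⟩
          rw [hzero x (Or.inr (le_of_lt (lt_of_le_of_lt hcs' hx.1)))]
          simp
  · have : toL2 J g = hmem.toLp g := by
      rw [toL2, dif_pos hmem]
    rw [this]
    exact hmem.coeFn_toLp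

end Main

end VqHelpers

open KnotWavelet in
theorem Vq_monotone
    (J : Set ℝ) (hJ : J.OrdConnected)
    (ks₀ ks₁ : Set ℝ) (h₀ : IsKnotSeq J ks₀) (h₁ : IsKnotSeq J ks₁) (hsub : ks₀ ⊆ ks₁)
    (θ₀ θ₁ : ℝ → ℝ)
    (hθ₀ : ∀ a ∈ ks₀, θ₀ a ∈ Set.Ioo (0 : ℝ) 1)
    (hθ₁ : ∀ a ∈ ks₁, θ₁ a ∈ Set.Ioo (0 : ℝ) 1)
    (hcond : ∀ a ∈ ks₀, (∃ y ∈ J, a < y) →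
      ((Set.Ioo a (succR ks₀ a) ∩ ks₁).Nonempty → bpt ks₀ θ₀ a ∈ ks₁) ∧
      (Set.Ioo a (succR ks₀ a) ∩ ks₁ = ∅ → bpt ks₀ θ₀ a ∈ bSet J ks₁ θ₁)) :
    Vq J ks₀ θ₀ ≤ Vq J ks₁ θ₁ := by
  unfold Vq
  refine Submodule.topologicalClosure_minimal _ ?_ (Submodule.isClosed_topologicalClosure _)
  rw [Submodule.span_le]
  rintro f (hf | ⟨a, ha, ⟨y, hyJ, hay⟩, rfl⟩)
  · exact Submodule.le_topologicalClosure _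
      (Submodule.subset_span (Or.inl (VqHelpers.S20_mono hJ h₀ h₁ hsub hf)))
  · have hθv := hθ₀ a ha
    obtain ⟨⟨hsmem, hlt⟩, hmin⟩ :=
      VqHelpers.isLeast_succ hJ h₀ (h₀.subset ha) (VqHelpers.exists_gt_knot h₀ hyJ hay)
    set s := succR ks₀ a with hs
    obtain ⟨hc1, hc2⟩ := hcond a ha ⟨y, hyJ, hay⟩
    rcases Set.eq_empty_or_nonempty (Set.Ioo a s ∩ ks₁) with hemp | hne
    · obtain ⟨a'', ha'', ⟨y'', hy'', hay''⟩, heq⟩ := hc2 hemp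
      obtain ⟨⟨hs''mem, hlt''⟩, hmin''⟩ :=
        VqHelpers.isLeast_succ hJ h₁ (h₁.subset ha'') (VqHelpers.exists_gt_knot h₁ hy'' hay'')
      have hθ1'' := hθ₁ a'' ha''
      have hb0 : a < bpt ks₀ θ₀ a ∧ bpt ks₀ θ₀ a < s := by
        unfold bpt
        rw [← hs]
        constructor <;> nlinarith [hθv.1, hθv.2, hlt]
      have hb1 : a'' < bpt ks₁ θ₁ a'' ∧ bpt ks₁ θ₁ a'' < succR ks₁ a'' := by
        unfold bpt
        constructor <;> nlinarith [hθ1''.1, hθ1''.2, hlt'']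
      have haa : a'' = a := by
        rcases lt_trichotomy a'' a with h | h | h
        · have h5 : succR ks₁ a'' ≤ a := hmin'' ⟨hsub ha, h⟩
          linarith [hb1.2, hb0.1, heq]
        · exact h
        · exact absurd (⟨⟨h, by linarith [hb1.1, hb0.2, heq]⟩, ha''⟩ :
            a'' ∈ Set.Ioo a s ∩ ks₁) (Set.eq_empty_iff_forall_notMem.mp hemp a'')
      subst haa
      have hss : succR ks₁ a'' = s := by
        refine IsLeast.csInf_eq ⟨⟨hsub hsmem, hlt⟩, ?_⟩
        rintro b ⟨hbks, habb⟩
        by_contra hbs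
        exact Set.eq_empty_iff_forall_notMem.mp hemp b ⟨⟨habb, not_le.mp hbs⟩, hbks⟩
      have hθeq : θ₁ a'' = θ₀ a'' := by
        unfold bpt at heq
        rw [hss] at heq
        have h6 : (θ₁ a'' - θ₀ a'') * (s - a'') = 0 := by linear_combination -heq
        rcases mul_eq_zero.mp h6 with h7 | h7
        · linarith
        · linarith
      have hzeq : zKnot J ks₀ θ₀ a'' = zKnot J ks₁ θ₁ a'' := by
        unfold zKnot
        rw [hss, hθeq, ← hs]
      rw [hzeq]
      exact Submodule.le_topologicalClosure _
        (Submodule.subset_span (Or.inr ⟨a'', hsub ha, ⟨y, hyJ, hay⟩, rfl⟩))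
    · have hbks₁ : (1 - θ₀ a) * a + θ₀ a * s ∈ ks₁ := hc1 hne
      have hmem : zKnot J ks₀ θ₀ a ∈ S20 J ks₁ :=
        VqHelpers.zKnot_mem_S20 hJ h₁ hθv (hsub ha) (hsub hsmem) hlt hbks₁
      exact Submodule.le_topologicalClosure _ (Submodule.subset_span (Or.inl hmem))
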